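/- In the ring O = ℤ + ℤ·(-1+√5)/2 (ring of integers of ℚ(√5)), every primitive element with norm in [-5, -1] has norm -5 or -1. Every solution of Nm(a) = -5 is of the form ±√5·u_f^(2n), and every solution of Nm(a) = -1 is of the form ±u_f^(2n+1), where u_f = (1+√5)/2. -/

import Mathlib

open Real

private lemma sqrt5_sq : Real.sqrt 5 ^ 2 = 5 := Real.sq_sqrt (by norm_num)
private lemma sqrt5_gt : 2 < Real.sqrt 5 := by
  nlinarith [sqrt5_sq, Real.sqrt_nonneg 5]
private lemma sqrt5_lt : Real.sqrt 5 < 3 := by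
  nlinarith [sqrt5_sq, Real.sqrt_nonneg 5]

private noncomputable def ph : ℝ := (1 + Real.sqrt 5) / 2
private noncomputable def qh : ℝ := (1 - Real.sqrt 5) / 2

private lemma ph_pos : 0 < ph := by unfold ph; nlinarith [sqrt5_gt]
private lemma ph_sq : ph ^ 2 = ph + 1 := by
  unfold ph; linear_combination (1/4 : ℝ) * sqrt5_sq
private lemma one_lt_ph_sq : 1 < ph ^ 2 := by
  unfold ph; nlinarith [sqrt5_gt]
private lemma two_sub_ph : (2 - ph) * ph ^ 2 = 1 := by
  unfold ph; linear_combination (-(1/8 : ℝ) * Real.sqrt 5 + 1/8) * sqrt5_sq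
private lemma two_sub_ph_pos : 0 < 2 - ph := by
  unfold ph; nlinarith [sqrt5_lt]

private lemma norm_eq (x y : ℤ) :
    ((x : ℝ) + y * ph) * ((x : ℝ) + y * qh) = ((x ^ 2 + x * y - y ^ 2 : ℤ) : ℝ) := by
  unfold ph qh; push_cast
  linear_combination (-(y : ℝ) ^ 2 / 4) * sqrt5_sq

private lemma sub_eq (x y : ℤ) :
    ((x : ℝ) + y * ph) - ((x : ℝ) + y * qh) = y * Real.sqrt 5 := by
  unfold ph qh; ring

private lemma mulT (x y : ℤ) :
    ((x : ℝ) + y * ph) * (2 - ph) = ((2 * x - y : ℤ) : ℝ) + ((y - x : ℤ) : ℝ) * ph := by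
  push_cast; linear_combination (-(y : ℝ)) * ph_sq

private lemma mulU (x y : ℤ) :
    ((x : ℝ) + y * ph) * ph ^ 2 = ((x + y : ℤ) : ℝ) + ((x + 2 * y : ℤ) : ℝ) * ph := by
  push_cast; linear_combination ((x : ℝ) + (y : ℝ) * (ph + 1)) * ph_sq

private lemma ph_zpow (n : ℤ) : ph ^ (2 * n) = (ph ^ 2) ^ n := by
  rw [zpow_mul, zpow_two, sq]

/-- The descent lemma: any positive element of `ℤ[φ]` of norm `c` is `a₀·φ^{2n}`,
provided the only one in the window `[m, m·φ²)` is `a₀`. -/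
private lemma descent (c : ℤ) (a₀ m : ℝ) (hm : 0 < m)
    (hbase : ∀ x y : ℤ, x ^ 2 + x * y - y ^ 2 = c →
      m ≤ (x : ℝ) + y * ph → (x : ℝ) + y * ph < m * ph ^ 2 → (x : ℝ) + y * ph = a₀)
    (x y : ℤ) (hc : x ^ 2 + x * y - y ^ 2 = c) (hpos : 0 < (x : ℝ) + y * ph) :
    ∃ n : ℤ, (x : ℝ) + y * ph = a₀ * ph ^ (2 * n) := by
  have hψ0 : (0 : ℝ) < ph ^ 2 := pow_pos ph_pos 2
  have hψne : (ph ^ 2 : ℝ) ≠ 0 := ne_of_gt hψ0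
  have e : ph ^ 2 * (2 - ph) = 1 := by linear_combination two_sub_ph
  have key : ∀ n : ℤ, ∀ x y : ℤ, x ^ 2 + x * y - y ^ 2 = c →
      m * (ph ^ 2) ^ n ≤ (x : ℝ) + y * ph →
      (x : ℝ) + y * ph < m * (ph ^ 2) ^ (n + 1) →
      (x : ℝ) + y * ph = a₀ * (ph ^ 2) ^ n := by
    intro n
    induction n using Int.induction_on with
    | zero =>
      intro x y h h1 h2
      simp only [zpow_zero, zpow_one, mul_one, zero_add] at h1 h2 ⊢
      exact hbase x y h h1 h2
    | succ k ih =>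
      intro x y h h1 h2
      have h' : (2 * x - y) ^ 2 + (2 * x - y) * (y - x) - (y - x) ^ 2 = c := by
        linear_combination h
      have hup : (ph ^ 2) ^ ((k : ℤ) + 1) = (ph ^ 2) ^ (k : ℤ) * ph ^ 2 :=
        zpow_add_one₀ hψne _
      have hup2 : (ph ^ 2) ^ ((k : ℤ) + 1 + 1) = (ph ^ 2) ^ ((k : ℤ) + 1) * ph ^ 2 :=
        zpow_add_one₀ hψne _
      have hb1 : m * (ph ^ 2) ^ (k : ℤ) ≤ ((2 * x - y : ℤ) : ℝ) + ((y - x : ℤ) : ℝ) * ph := by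
        rw [← mulT]
        have := mul_le_mul_of_nonneg_right h1 two_sub_ph_pos.le
        calc m * (ph ^ 2) ^ (k : ℤ) = m * (ph ^ 2) ^ ((k : ℤ) + 1) * (2 - ph) := by
              rw [hup]; linear_combination (-(m * (ph ^ 2) ^ (k : ℤ))) * e
          _ ≤ _ := this
      have hb2 : ((2 * x - y : ℤ) : ℝ) + ((y - x : ℤ) : ℝ) * ph
          < m * (ph ^ 2) ^ ((k : ℤ) + 1) := by
        rw [← mulT]
        have := mul_lt_mul_of_pos_right h2 two_sub_ph_pos
        calc ((x : ℝ) + y * ph) * (2 - ph) < m * (ph ^ 2) ^ ((k : ℤ) + 1 + 1) * (2 - ph) := this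
          _ = m * (ph ^ 2) ^ ((k : ℤ) + 1) := by
              rw [hup2]; linear_combination m * (ph ^ 2) ^ ((k : ℤ) + 1) * e
      have hres := ih (2 * x - y) (y - x) h' hb1 hb2
      rw [← mulT] at hres
      have : ((x : ℝ) + y * ph) * (2 - ph) * ph ^ 2 = (x : ℝ) + y * ph := by
        linear_combination ((x : ℝ) + y * ph) * two_sub_ph
      calc (x : ℝ) + y * ph = ((x : ℝ) + y * ph) * (2 - ph) * ph ^ 2 := this.symm
        _ = a₀ * (ph ^ 2) ^ (k : ℤ) * ph ^ 2 := by rw [hres]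
        _ = a₀ * (ph ^ 2) ^ ((k : ℤ) + 1) := by rw [hup]; ring
    | pred k ih =>
      intro x y h h1 h2
      have h' : (x + y) ^ 2 + (x + y) * (x + 2 * y) - (x + 2 * y) ^ 2 = c := by
        linear_combination h
      have hup : (ph ^ 2) ^ (-(k : ℤ)) = (ph ^ 2) ^ (-(k : ℤ) - 1) * ph ^ 2 := by
        rw [← zpow_add_one₀ hψne]; norm_num
      have hup2 : (ph ^ 2) ^ (-(k : ℤ) + 1) = (ph ^ 2) ^ (-(k : ℤ)) * ph ^ 2 := by
        rw [← zpow_add_one₀ hψne]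
      have hb1 : m * (ph ^ 2) ^ (-(k : ℤ)) ≤ ((x + y : ℤ) : ℝ) + ((x + 2 * y : ℤ) : ℝ) * ph := by
        rw [← mulU]
        have := mul_le_mul_of_nonneg_right h1 hψ0.le
        calc m * (ph ^ 2) ^ (-(k : ℤ)) = m * (ph ^ 2) ^ (-(k : ℤ) - 1) * ph ^ 2 := by
              rw [hup]; ring
          _ ≤ _ := this
      have hb2 : ((x + y : ℤ) : ℝ) + ((x + 2 * y : ℤ) : ℝ) * ph
          < m * (ph ^ 2) ^ (-(k : ℤ) + 1) := by
        rw [← mulU]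
        have h2' : (x : ℝ) + y * ph < m * (ph ^ 2) ^ (-(k : ℤ)) := by
          have : -(k : ℤ) - 1 + 1 = -(k : ℤ) := by ring
          rw [← this]; exact h2
        calc ((x : ℝ) + y * ph) * ph ^ 2 < m * (ph ^ 2) ^ (-(k : ℤ)) * ph ^ 2 :=
              mul_lt_mul_of_pos_right h2' hψ0
          _ = m * (ph ^ 2) ^ (-(k : ℤ) + 1) := by rw [hup2]; ring
      have hres := ih (x + y) (x + 2 * y) h' hb1 hb2
      rw [← mulU] at hres
      have : ((x : ℝ) + y * ph) * ph ^ 2 * (2 - ph) = (x : ℝ) + y * ph := by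
        linear_combination ((x : ℝ) + y * ph) * e
      calc (x : ℝ) + y * ph = ((x : ℝ) + y * ph) * ph ^ 2 * (2 - ph) := this.symm
        _ = a₀ * (ph ^ 2) ^ (-(k : ℤ)) * (2 - ph) := by rw [hres]
        _ = a₀ * (ph ^ 2) ^ (-(k : ℤ) - 1) := by rw [hup]; linear_combination (a₀ * (ph ^ 2) ^ (-(k : ℤ) - 1)) * e
  obtain ⟨n, hn1, hn2⟩ := exists_mem_Ico_zpow (div_pos hpos hm) one_lt_ph_sq
  refine ⟨n, ?_⟩
  rw [ph_zpow]
  have hA := (le_div_iff₀ hm).mp hn1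
  have hB := (div_lt_iff₀ hm).mp hn2
  rw [mul_comm _ m] at hA hB
  exact key n x y hc hA hB

private lemma base1 (x y : ℤ) (h : x ^ 2 + x * y - y ^ 2 = -1)
    (h1 : (1 : ℝ) ≤ (x : ℝ) + y * ph) (h2 : (x : ℝ) + y * ph < 1 * ph ^ 2) :
    (x : ℝ) + y * ph = ph := by
  have hs := sqrt5_sq
  have hs2 := sqrt5_gt
  have hs3 := sqrt5_lt
  have hab : ((x : ℝ) + y * ph) * ((x : ℝ) + y * qh) = -1 := by
    rw [norm_eq, h]; norm_num
  have hph2 : ph ^ 2 = (3 + Real.sqrt 5) / 2 := by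
    unfold ph; linear_combination (1/4 : ℝ) * hs
  have hph : ph = (1 + Real.sqrt 5) / 2 := rfl
  set a : ℝ := (x : ℝ) + y * ph with ha
  set b : ℝ := (x : ℝ) + y * qh with hb
  have ht0 : 0 < -b := by nlinarith
  have ht1 : -b ≤ 1 := by nlinarith
  have ht2 : 2 - ph < -b := by nlinarith [two_sub_ph, one_lt_ph_sq]
  have hys : (y : ℝ) * Real.sqrt 5 = a - b := (sub_eq x y).symm
  have hy1 : 1 ≤ y := by
    by_contra hcon
    push_neg at hcon
    have : (y : ℝ) ≤ 0 := by exact_mod_cast Int.lt_add_one_iff.mp (by omega)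
    nlinarith
  have hy2 : y ≤ 1 := by
    by_contra hcon
    push_neg at hcon
    have : (2 : ℝ) ≤ (y : ℝ) := by exact_mod_cast hcon
    nlinarith
  have hy : y = 1 := le_antisymm hy2 hy1
  subst hy
  have hx : x * (x + 1) = 0 := by linarith [h]
  rcases mul_eq_zero.mp hx with hx0 | hx1
  · rw [ha, hx0, hph]; push_cast; ring
  · exfalso
    have hxv : x = -1 := by omega
    rw [ha, hxv, hph] at h1
    push_cast at h1
    nlinarith
  
private lemma base5 (x y : ℤ) (h : x ^ 2 + x * y - y ^ 2 = -5)
    (h1 : Real.sqrt 5 ≤ (x : ℝ) + y * ph)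
    (h2 : (x : ℝ) + y * ph < Real.sqrt 5 * ph ^ 2) :
    (x : ℝ) + y * ph = Real.sqrt 5 := by
  have hs := sqrt5_sq
  have hs2 := sqrt5_gt
  have hs3 := sqrt5_lt
  have hab : ((x : ℝ) + y * ph) * ((x : ℝ) + y * qh) = -5 := by
    rw [norm_eq, h]; norm_num
  have hph2 : Real.sqrt 5 * ph ^ 2 = (3 * Real.sqrt 5 + 5) / 2 := by
    unfold ph; linear_combination ((Real.sqrt 5 + 2) / 4 : ℝ) * hs
  have hph : ph = (1 + Real.sqrt 5) / 2 := rfl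
  set a : ℝ := (x : ℝ) + y * ph with ha
  set b : ℝ := (x : ℝ) + y * qh with hb
  have ha0 : 0 < a := by nlinarith
  have ht0 : 0 < -b := by nlinarith
  have ht1 : -b ≤ Real.sqrt 5 := by nlinarith [mul_nonneg (sub_nonneg.mpr h1) ht0.le]
  have ht2 : (3 * Real.sqrt 5 - 5) / 2 < -b := by
    nlinarith [mul_pos (sub_pos.mpr (lt_of_lt_of_le' h2 (le_of_eq rfl))) ht0]
  have hys : (y : ℝ) * Real.sqrt 5 = a - b := (sub_eq x y).symm
  have hy1 : 2 ≤ y := by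
    by_contra hcon
    push_neg at hcon
    have : (y : ℝ) ≤ 1 := by exact_mod_cast Int.lt_add_one_iff.mp (by omega)
    nlinarith
  have hy2 : y ≤ 3 := by
    by_contra hcon
    push_neg at hcon
    have : (4 : ℝ) ≤ (y : ℝ) := by exact_mod_cast hcon
    nlinarith
  interval_cases y
  · -- y = 2
    have hx : (x + 1) ^ 2 = 0 := by linarith [h]
    have hxv : x = -1 := by nlinarith [sq_nonneg (x + 1)]
    rw [ha, hxv, hph]; push_cast; linarith
  · -- y = 3
    exfalso
    have hx : (x - 1) * (x + 4) = 0 := by linarith [h]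
    rcases mul_eq_zero.mp hx with hx1 | hx4
    · have hxv : x = 1 := by omega
      rw [ha, hxv] at h2
      rw [hph2, hph] at h2
      push_cast at h2
      linarith
    · have hxv : x = -4 := by omega
      rw [ha, hxv, hph] at h1
      push_cast at h1
      linarith

/-- Case `k = 5` of Proposition 4.2: for coprime `(d,r)`, the element
`a = -d + r(-5+√5)/2` of the ring of integers of `ℚ(√5)` has norm
`N = d² + 5rd + 5r²`; if `N ∈ [-5,-1]` then `N = -5` or `N = -1`. Solutions of
`Nm(a) = -5` are `±√5·u_f^(2n)` and solutions of `Nm(a) = -1` are `±u_f^(2n+1)`,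
where `u_f = (1+√5)/2`. -/
theorem stmt8 (d r : ℤ) :
    let N : ℤ := d^2 + 5 * r * d + 5 * r^2
    (Int.gcd d r = 1 → -5 ≤ N → N ≤ -1 → N = -5 ∨ N = -1) ∧
    (N = -5 → ∃ (n : ℤ) (ε : ℝ), (ε = 1 ∨ ε = -1) ∧
      (-(d : ℝ)) + r * ((-5 + Real.sqrt 5) / 2) =
        ε * Real.sqrt 5 * (((1 + Real.sqrt 5) / 2) ^ (2 * n))) ∧
    (N = -1 → ∃ (n : ℤ) (ε : ℝ), (ε = 1 ∨ ε = -1) ∧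
      (-(d : ℝ)) + r * ((-5 + Real.sqrt 5) / 2) =
        ε * (((1 + Real.sqrt 5) / 2) ^ (2 * n + 1))) := by
  intro N
  have hNdef : N = d ^ 2 + 5 * r * d + 5 * r ^ 2 := rfl
  have hcast : (-(d : ℝ)) + r * ((-5 + Real.sqrt 5) / 2)
      = ((-d - 3 * r : ℤ) : ℝ) + ((r : ℤ) : ℝ) * ph := by
    unfold ph; push_cast; ring
  have hphrfl : ((1 + Real.sqrt 5) / 2 : ℝ) = ph := rfl
  refine ⟨?_, ?_, ?_⟩
  · -- part 1
    intro hg hl hu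
    have h5 : N = -5 ∨ N = -4 ∨ N = -3 ∨ N = -2 ∨ N = -1 := by omega
    have heven : N = -4 ∨ N = -2 → False := by
      intro hN
      have hd2 : ∀ a b : ZMod 2, (a ^ 2 + 5 * b * a + 5 * b ^ 2 = -4 ∨
          a ^ 2 + 5 * b * a + 5 * b ^ 2 = -2) → a = 0 ∧ b = 0 := by decide
      have h2' : ((d : ZMod 2) ^ 2 + 5 * r * d + 5 * r ^ 2 = -4 ∨
          (d : ZMod 2) ^ 2 + 5 * (r : ZMod 2) * d + 5 * (r : ZMod 2) ^ 2 = -2) := by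
        rcases hN with hN | hN
        · left
          have := congrArg (fun z : ℤ => (z : ZMod 2)) (show d ^ 2 + 5 * r * d + 5 * r ^ 2 = -4 from hNdef ▸ hN)
          simpa only [Int.cast_add, Int.cast_mul, Int.cast_pow, Int.cast_ofNat, Int.cast_neg] using this
        · right
          have := congrArg (fun z : ℤ => (z : ZMod 2)) (show d ^ 2 + 5 * r * d + 5 * r ^ 2 = -2 from hNdef ▸ hN)
          simpa only [Int.cast_add, Int.cast_mul, Int.cast_pow, Int.cast_ofNat, Int.cast_neg] using this
      obtain ⟨hd0, hr0⟩ := hd2 _ _ h2'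
      have hdd : (2 : ℤ) ∣ d := by
        exact_mod_cast (ZMod.intCast_zmod_eq_zero_iff_dvd d 2).mp hd0
      have hrr : (2 : ℤ) ∣ r := by
        exact_mod_cast (ZMod.intCast_zmod_eq_zero_iff_dvd r 2).mp hr0
      have := Int.dvd_gcd hdd hrr
      rw [hg] at this
      norm_num at this
    have hthree : N = -3 → False := by
      intro hN
      have hd5 : ∀ a b : ZMod 5, a ^ 2 + 5 * b * a + 5 * b ^ 2 ≠ -3 := by decide
      have := congrArg (fun z : ℤ => (z : ZMod 5)) (hNdef ▸ hN)
      push_cast at this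
      exact hd5 d r this
    rcases h5 with h | h | h | h | h
    · exact Or.inl h
    · exact absurd h (fun h => heven (Or.inl h))
    · exact absurd h hthree
    · exact absurd h (fun h => heven (Or.inr h))
    · exact Or.inr h
  · -- part 2 : N = -5
    intro hN
    have hN' : d ^ 2 + 5 * r * d + 5 * r ^ 2 = -5 := hNdef ▸ hN
    have hnorm : (-d - 3 * r) ^ 2 + (-d - 3 * r) * r - r ^ 2 = -5 := by
      linear_combination hN'
    have hnorm' : (d + 3 * r) ^ 2 + (d + 3 * r) * (-r) - (-r) ^ 2 = -5 := by
      linear_combination hN'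
    have hne := norm_eq (-d - 3 * r) r
    rw [hnorm] at hne
    have hs0 : (0 : ℝ) < Real.sqrt 5 := by linarith [sqrt5_gt]
    rcases lt_trichotomy (((-d - 3 * r : ℤ) : ℝ) + ((r : ℤ) : ℝ) * ph) 0 with hlt | heq | hgt
    · -- negative: use (d + 3r, -r)
      have hpos : 0 < ((d + 3 * r : ℤ) : ℝ) + ((-r : ℤ) : ℝ) * ph := by
        push_cast at hlt ⊢; linarith
      obtain ⟨n, hn⟩ := descent (-5) (Real.sqrt 5) (Real.sqrt 5) hs0 base5
        (d + 3 * r) (-r) hnorm' hpos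
      refine ⟨n, -1, Or.inr rfl, ?_⟩
      rw [hphrfl, hcast]
      push_cast at hn ⊢
      linarith
    · exfalso; rw [heq] at hne; norm_num at hne
    · obtain ⟨n, hn⟩ := descent (-5) (Real.sqrt 5) (Real.sqrt 5) hs0 base5
        (-d - 3 * r) r hnorm hgt
      refine ⟨n, 1, Or.inl rfl, ?_⟩
      rw [hphrfl, hcast, hn]; ring
  · -- part 3 : N = -1
    intro hN
    have hN' : d ^ 2 + 5 * r * d + 5 * r ^ 2 = -1 := hNdef ▸ hN
    have hnorm : (-d - 3 * r) ^ 2 + (-d - 3 * r) * r - r ^ 2 = -1 := by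
      linear_combination hN'
    have hnorm' : (d + 3 * r) ^ 2 + (d + 3 * r) * (-r) - (-r) ^ 2 = -1 := by
      linear_combination hN'
    have hne := norm_eq (-d - 3 * r) r
    rw [hnorm] at hne
    have hzp : ∀ n : ℤ, ph ^ (2 * n + 1) = ph ^ (2 * n) * ph :=
      fun n => zpow_add_one₀ (ne_of_gt ph_pos) (2 * n)
    rcases lt_trichotomy (((-d - 3 * r : ℤ) : ℝ) + ((r : ℤ) : ℝ) * ph) 0 with hlt | heq | hgt
    · have hpos : 0 < ((d + 3 * r : ℤ) : ℝ) + ((-r : ℤ) : ℝ) * ph := by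
        push_cast at hlt ⊢; linarith
      obtain ⟨n, hn⟩ := descent (-1) ph 1 one_pos base1 (d + 3 * r) (-r) hnorm' hpos
      refine ⟨n, -1, Or.inr rfl, ?_⟩
      rw [hphrfl, hcast, hzp n]
      push_cast at hn ⊢
      linarith
    · exfalso; rw [heq] at hne; norm_num at hne
    · obtain ⟨n, hn⟩ := descent (-1) ph 1 one_pos base1 (-d - 3 * r) r hnorm hgt
      refine ⟨n, 1, Or.inl rfl, ?_⟩
      rw [hphrfl, hcast, hn, hzp n]; ring
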